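/- Let d ≥ 1, Nα ≥ 2, Nβ ≥ 1, N = Nα + Nβ, let X_1,…,X_N ⊆ ℝ^d be open sets, and let u_1,…,u_N with u_i : X_i → ℝ satisfy the splitting inequality for the cost c. Fix x_1⁰ ∈ X_1 at which u_1 is differentiable, and suppose that for k = 1, 2 the points (x_1⁰, x_{2k},…,x_{Nα k}, y_{1k},…,y_{Nβ k}) ∈ X_1×…×X_N attain equality in the splitting inequality. Then y_{s1} = y_{s2} for every s ∈ {1,…,Nβ}. -/

import Mathlib

open MeasureTheory RealInnerProductSpace

noncomputable section

/-- The "starred" vector `y* = (-2 y¹, y², …, y^d)`. -/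
def ystar {d : ℕ} (hd : 0 < d) (y : EuclideanSpace ℝ (Fin d)) : EuclideanSpace ℝ (Fin d) :=
  y - (3 * y ⟨0, hd⟩) • EuclideanSpace.single (⟨0, hd⟩ : Fin d) (1 : ℝ)

/-- The cost `c(x_1,…,x_Nα,y_1,…,y_Nβ) = ∑_i ∑_j x_i · y_j*`, in block coordinates. -/
def costxy {d Nα Nβ : ℕ} (hd : 0 < d)
    (x : Fin Nα → EuclideanSpace ℝ (Fin d)) (y : Fin Nβ → EuclideanSpace ℝ (Fin d)) : ℝ :=
  ∑ i : Fin Nα, ∑ j : Fin Nβ, ⟪x i, ystar hd (y j)⟫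

lemma costxy_eq {d Nα Nβ : ℕ} (hd : 0 < d)
    (x : Fin Nα → EuclideanSpace ℝ (Fin d)) (y : Fin Nβ → EuclideanSpace ℝ (Fin d)) :
    costxy hd x y = ⟪∑ i, x i, ∑ j, ystar hd (y j)⟫ := by
  rw [sum_inner]
  unfold costxy
  exact Finset.sum_congr rfl fun i _ => (inner_sum _ _ _).symm

lemma ystar_inj {d : ℕ} (hd : 0 < d) {a b : EuclideanSpace ℝ (Fin d)}
    (h : ystar hd a = ystar hd b) : a = b := by
  have h0 : a ⟨0, hd⟩ = b ⟨0, hd⟩ := by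
    have := congrArg (fun v => v ⟨0, hd⟩) h
    simp only [ystar, PiLp.sub_apply, PiLp.smul_apply, EuclideanSpace.single_apply,
      smul_eq_mul] at this
    simp at this
    linarith
  ext i
  have := congrArg (fun v => v i) h
  simp only [ystar, PiLp.sub_apply, PiLp.smul_apply, EuclideanSpace.single_apply,
    smul_eq_mul, h0] at this
  linarith

lemma sum_update_apply {ι α M : Type*} [Fintype ι] [DecidableEq ι] [AddCommGroup M]
    (F : ι → α → M) (x : ι → α) (j : ι) (v : α) :
    ∑ i, F i (Function.update x j v i) = ∑ i, F i (x i) + (F j v - F j (x j)) := by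
  have h : ∀ i, F i (Function.update x j v i)
      = Function.update (fun i => F i (x i)) j (F j v) i := by
    intro i
    rcases eq_or_ne i j with rfl | h
    · simp
    · simp [Function.update_of_ne h]
  simp_rw [h]
  rw [Finset.sum_update_of_mem (Finset.mem_univ j),
    Finset.sum_eq_sum_sdiff_singleton_add (Finset.mem_univ j) (fun i => F i (x i))]
  abel

lemma innerSL_inj' {d : ℕ} {a b : EuclideanSpace ℝ (Fin d)}
    (h : (innerSL ℝ a : EuclideanSpace ℝ (Fin d) →L[ℝ] ℝ) = innerSL ℝ b) : a = b := by
  have h2 := DFunLike.congr_fun h (a - b)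
  simp only [innerSL_apply_apply] at h2
  have : ⟪a - b, a - b⟫ = 0 := by
    rw [inner_sub_left]; linarith
  exact sub_eq_zero.mp (inner_self_eq_zero.mp this)

lemma grad_eq {d Nα Nβ : ℕ} (hd : 0 < d) (h0 : 0 < Nα)
    (Xa : Fin Nα → Set (EuclideanSpace ℝ (Fin d)))
    (Xb : Fin Nβ → Set (EuclideanSpace ℝ (Fin d)))
    (hXa : ∀ i, IsOpen (Xa i))
    (ua : Fin Nα → EuclideanSpace ℝ (Fin d) → ℝ)
    (ub : Fin Nβ → EuclideanSpace ℝ (Fin d) → ℝ)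
    (hsplit : ∀ (x : Fin Nα → EuclideanSpace ℝ (Fin d))
        (y : Fin Nβ → EuclideanSpace ℝ (Fin d)),
        (∀ i, x i ∈ Xa i) → (∀ j, y j ∈ Xb j) →
        ∑ i, ua i (x i) + ∑ j, ub j (y j) ≤ costxy hd x y)
    (x10 : EuclideanSpace ℝ (Fin d))
    (hdiff : DifferentiableAt ℝ (ua ⟨0, h0⟩) x10)
    (x : Fin Nα → EuclideanSpace ℝ (Fin d)) (y : Fin Nβ → EuclideanSpace ℝ (Fin d))
    (hx : ∀ i, x i ∈ Xa i) (hy : ∀ j, y j ∈ Xb j)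
    (hx0 : x ⟨0, h0⟩ = x10)
    (heq : ∑ i, ua i (x i) + ∑ j, ub j (y j) = costxy hd x y) :
    fderiv ℝ (ua ⟨0, h0⟩) x10
      = (innerSL ℝ (∑ j, ystar hd (y j)) : EuclideanSpace ℝ (Fin d) →L[ℝ] ℝ) := by
  classical
  set i0 : Fin Nα := ⟨0, h0⟩ with hi0
  set Z : EuclideanSpace ℝ (Fin d) := ∑ j, ystar hd (y j) with hZ
  have hle : ∀ x' ∈ Xa i0, ua i0 x' - (innerSL ℝ Z) x' ≤ ua i0 x10 - (innerSL ℝ Z) x10 := by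
    intro x' hx'
    have hmem : ∀ i, Function.update x i0 x' i ∈ Xa i := by
      intro i
      rcases eq_or_ne i i0 with rfl | h
      · simpa using hx'
      · simpa [Function.update_of_ne h] using hx i
    have h1 := hsplit (Function.update x i0 x') y hmem hy
    rw [costxy_eq, sum_update_apply ua x i0 x',
      sum_update_apply (fun (_ : Fin Nα) (a : EuclideanSpace ℝ (Fin d)) => a) x i0 x'] at h1
    rw [costxy_eq] at heq
    rw [inner_add_left, inner_sub_left] at h1
    rw [← hZ] at h1 heq
    simp only [innerSL_apply_apply]
    rw [real_inner_comm x' Z, real_inner_comm x10 Z, ← hx0]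
    linarith
  have hx10mem : x10 ∈ Xa i0 := hx0 ▸ hx i0
  have hmax : IsLocalMax (fun x' => ua i0 x' - (innerSL ℝ Z) x') x10 := by
    filter_upwards [(hXa i0).mem_nhds hx10mem] with x' hx' using hle x' hx'
  have hdZ : DifferentiableAt ℝ (fun x' => (innerSL ℝ Z) x') x10 :=
    (innerSL ℝ Z).differentiableAt
  have hfd : fderiv ℝ (fun x' => ua i0 x' - (innerSL ℝ Z) x') x10 = 0 :=
    hmax.fderiv_eq_zero
  rw [fderiv_fun_sub hdiff hdZ, (innerSL ℝ Z).fderiv] at hfd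
  exact sub_eq_zero.mp hfd

theorem stmt_10 {d Nα Nβ : ℕ} (hd : 0 < d) (hNα : 2 ≤ Nα) (hNβ : 0 < Nβ)
    (Xa : Fin Nα → Set (EuclideanSpace ℝ (Fin d)))
    (Xb : Fin Nβ → Set (EuclideanSpace ℝ (Fin d)))
    (hXa : ∀ i, IsOpen (Xa i)) (hXb : ∀ j, IsOpen (Xb j))
    (ua : Fin Nα → EuclideanSpace ℝ (Fin d) → ℝ)
    (ub : Fin Nβ → EuclideanSpace ℝ (Fin d) → ℝ)
    (hsplit : ∀ (x : Fin Nα → EuclideanSpace ℝ (Fin d))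
        (y : Fin Nβ → EuclideanSpace ℝ (Fin d)),
        (∀ i, x i ∈ Xa i) → (∀ j, y j ∈ Xb j) →
        ∑ i, ua i (x i) + ∑ j, ub j (y j) ≤ costxy hd x y)
    (x10 : EuclideanSpace ℝ (Fin d))
    (hdiff : DifferentiableAt ℝ (ua ⟨0, by omega⟩) x10)
    (x1 x2 : Fin Nα → EuclideanSpace ℝ (Fin d))
    (y1 y2 : Fin Nβ → EuclideanSpace ℝ (Fin d))
    (hx1 : ∀ i, x1 i ∈ Xa i) (hx2 : ∀ i, x2 i ∈ Xa i)
    (hy1 : ∀ j, y1 j ∈ Xb j) (hy2 : ∀ j, y2 j ∈ Xb j)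
    (hx10 : x1 ⟨0, by omega⟩ = x10) (hx20 : x2 ⟨0, by omega⟩ = x10)
    (heq1 : ∑ i, ua i (x1 i) + ∑ j, ub j (y1 j) = costxy hd x1 y1)
    (heq2 : ∑ i, ua i (x2 i) + ∑ j, ub j (y2 j) = costxy hd x2 y2) :
    ∀ s : Fin Nβ, y1 s = y2 s := by
  classical
  intro s
  have h0 : 0 < Nα := by omega
  -- gradients
  have hG1 := grad_eq hd h0 Xa Xb hXa ua ub hsplit x10 hdiff x1 y1 hx1 hy1 hx10 heq1
  have hG2 := grad_eq hd h0 Xa Xb hXa ua ub hsplit x10 hdiff x2 y2 hx2 hy2 hx20 heq2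
  set Z1 : EuclideanSpace ℝ (Fin d) := ∑ j, ystar hd (y1 j) with hZ1def
  set Z2 : EuclideanSpace ℝ (Fin d) := ∑ j, ystar hd (y2 j) with hZ2def
  have hZeq : Z1 = Z2 := innerSL_inj' (hG1.symm.trans hG2)
  set X1 : EuclideanSpace ℝ (Fin d) := ∑ i, x1 i with hX1def
  have he1 : ∑ i, ua i (x1 i) + ∑ j, ub j (y1 j) = ⟪X1, Z1⟫ := by
    rw [heq1, costxy_eq]
  have he2 : ∑ i, ua i (x2 i) + ∑ j, ub j (y2 j) = ⟪∑ i, x2 i, Z2⟫ := by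
    rw [heq2, costxy_eq]
  -- B1 = B2
  have hm1 := hsplit x1 y2 hx1 hy2
  rw [costxy_eq, ← hZ2def, ← hX1def, ← hZeq] at hm1
  have hm2 := hsplit x2 y1 hx2 hy1
  rw [costxy_eq, ← hZ1def, hZeq] at hm2
  have hB : ∑ j, ub j (y1 j) = ∑ j, ub j (y2 j) := by linarith
  -- mixed y-points
  set w : EuclideanSpace ℝ (Fin d) := ystar hd (y2 s) - ystar hd (y1 s) with hwdef
  have hy1' : ∀ j, Function.update y1 s (y2 s) j ∈ Xb j := by
    intro j
    rcases eq_or_ne j s with rfl | h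
    · simpa using hy2 j
    · simpa [Function.update_of_ne h] using hy1 j
  have hy2' : ∀ j, Function.update y2 s (y1 s) j ∈ Xb j := by
    intro j
    rcases eq_or_ne j s with rfl | h
    · simpa using hy1 j
    · simpa [Function.update_of_ne h] using hy2 j
  have h3 := hsplit x1 (Function.update y1 s (y2 s)) hx1 hy1'
  rw [costxy_eq, sum_update_apply ub y1 s (y2 s),
    sum_update_apply (fun (_ : Fin Nβ) (a : EuclideanSpace ℝ (Fin d)) => ystar hd a) y1 s (y2 s),
    ← hZ1def, ← hX1def, inner_add_right, inner_sub_right] at h3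
  have h4 := hsplit x1 (Function.update y2 s (y1 s)) hx1 hy2'
  rw [costxy_eq, sum_update_apply ub y2 s (y1 s),
    sum_update_apply (fun (_ : Fin Nβ) (a : EuclideanSpace ℝ (Fin d)) => ystar hd a) y2 s (y1 s),
    ← hZ2def, ← hX1def, ← hZeq, inner_add_right, inner_sub_right] at h4
  -- equality at the mixed point (x1, y1[s ↦ y2 s])
  have heqmix : ∑ i, ua i (x1 i) + ∑ j, ub j (Function.update y1 s (y2 s) j)
      = costxy hd x1 (Function.update y1 s (y2 s)) := by
    rw [costxy_eq, sum_update_apply ub y1 s (y2 s),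
      sum_update_apply (fun (_ : Fin Nβ) (a : EuclideanSpace ℝ (Fin d)) => ystar hd a) y1 s (y2 s),
      ← hZ1def, ← hX1def, inner_add_right, inner_sub_right]
    linarith
  have hGmix := grad_eq hd h0 Xa Xb hXa ua ub hsplit x10 hdiff x1
    (Function.update y1 s (y2 s)) hx1 hy1' hx10 heqmix
  rw [sum_update_apply (fun (_ : Fin Nβ) (a : EuclideanSpace ℝ (Fin d)) => ystar hd a) y1 s (y2 s),
    ← hZ1def] at hGmix
  have hfin : Z1 = Z1 + (ystar hd (y2 s) - ystar hd (y1 s)) :=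
    innerSL_inj' (hG1.symm.trans hGmix)
  have : ystar hd (y1 s) = ystar hd (y2 s) := by
    have h5 : ystar hd (y2 s) - ystar hd (y1 s) = 0 := (add_eq_left).mp hfin.symm
    exact (sub_eq_zero.mp h5).symm
  exact ystar_inj hd this
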